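/- Let X be a 2-Dirac mixture, i.e., X takes value μ_1 with probability ε and μ_2 with probability 1 − ε, where 0 < ε < 1 and μ_1 < μ_2. Then min_{s ∈ ℝ} Var|X − s| = 0, attained at s = (μ_1 + μ_2)/2, and moreover Var|X − s**| = 0 where s** = Cov(X, X²)/(2 Var X) is the minimizer of s ↦ Var[(X − s)²]. Hence both standardized folding ratios Φ*(X) = 4 · min_s Var|X − s| / Var X and Φ**(X) = 4 · Var|X − s**| / Var X equal 0. -/

import Mathlib

open MeasureTheory ProbabilityTheory

section Helpers

variable {ε μ₁ μ₂ : ℝ}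

lemma integrable_dirac' (f : ℝ → ℝ) (a : ℝ) : Integrable f (Measure.dirac a) := by
  have h : f =ᵐ[Measure.dirac a] fun _ => f a := by
    rw [Filter.EventuallyEq, MeasureTheory.ae_dirac_eq]
    exact Filter.eventually_pure.2 rfl
  exact (integrable_const (f a)).congr h.symm

lemma intP (hε0 : 0 < ε) (hε1 : ε < 1) {P : Measure ℝ}
    (hP : P = ENNReal.ofReal ε • Measure.dirac μ₁ +
      ENNReal.ofReal (1 - ε) • Measure.dirac μ₂) (f : ℝ → ℝ) :
    ∫ x, f x ∂P = ε * f μ₁ + (1 - ε) * f μ₂ := by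
  subst hP
  rw [integral_add_measure, integral_smul_measure, integral_smul_measure,
    integral_dirac, integral_dirac]
  · simp [smul_eq_mul, ENNReal.toReal_ofReal hε0.le,
      ENNReal.toReal_ofReal (by linarith : (0:ℝ) ≤ 1 - ε)]
  · exact (integrable_dirac' f μ₁).smul_measure ENNReal.ofReal_ne_top
  · exact (integrable_dirac' f μ₂).smul_measure ENNReal.ofReal_ne_top

lemma lintP {P : Measure ℝ}
    (hP : P = ENNReal.ofReal ε • Measure.dirac μ₁ +
      ENNReal.ofReal (1 - ε) • Measure.dirac μ₂) (g : ℝ → ENNReal) :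
    ∫⁻ x, g x ∂P = ENNReal.ofReal ε * g μ₁ + ENNReal.ofReal (1 - ε) * g μ₂ := by
  subst hP
  rw [lintegral_add_measure, lintegral_smul_measure, lintegral_smul_measure,
    lintegral_dirac, lintegral_dirac]
  simp only [smul_eq_mul]

lemma varP (hε0 : 0 < ε) (hε1 : ε < 1) {P : Measure ℝ}
    (hP : P = ENNReal.ofReal ε • Measure.dirac μ₁ +
      ENNReal.ofReal (1 - ε) • Measure.dirac μ₂) (f : ℝ → ℝ) :
    variance f P = ε * (1 - ε) * (f μ₁ - f μ₂) ^ 2 := by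
  have h1 : (0:ℝ) ≤ 1 - ε := by linarith
  have hm : ∫ x, f x ∂P = ε * f μ₁ + (1 - ε) * f μ₂ := intP hε0 hε1 hP f
  rw [variance, evariance_eq_lintegral_ofReal, lintP hP, hm]
  rw [← ENNReal.ofReal_mul hε0.le, ← ENNReal.ofReal_mul h1,
    ← ENNReal.ofReal_add (by positivity) (by positivity),
    ENNReal.toReal_ofReal (by positivity)]
  ring

end Helpers

/-- Let `X` be a 2-Dirac mixture taking value `μ₁` with probability `ε` and
`μ₂` with probability `1 - ε`, where `0 < ε < 1` and `μ₁ < μ₂`. Then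
`min_{s ∈ ℝ} Var |X - s| = 0`, attained at `s = (μ₁ + μ₂)/2`; moreover `Var |X - s⋆⋆| = 0`
where `s⋆⋆ = Cov(X, X²)/(2 Var X)` is the minimizer of `s ↦ Var ((X - s)²)`. Hence both
standardized folding ratios `Φ⋆(X)` and `Φ⋆⋆(X)` equal `0`. -/
theorem stmt_12 (ε μ₁ μ₂ : ℝ) (hε0 : 0 < ε) (hε1 : ε < 1) (hμ : μ₁ < μ₂)
    (P : Measure ℝ)
    (hP : P = ENNReal.ofReal ε • Measure.dirac μ₁ +
      ENNReal.ofReal (1 - ε) • Measure.dirac μ₂)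
    (sstarstar : ℝ)
    (hss : sstarstar = ((∫ x, x * x ^ 2 ∂P) - (∫ x, x ∂P) * (∫ x, x ^ 2 ∂P)) /
      (2 * variance (fun x => x) P)) :
    (⨅ s : ℝ, variance (fun x => |x - s|) P) = 0 ∧
    variance (fun x => |x - (μ₁ + μ₂) / 2|) P = 0 ∧
    (∀ s : ℝ, variance (fun x => (x - sstarstar) ^ 2) P ≤
      variance (fun x => (x - s) ^ 2) P) ∧
    variance (fun x => |x - sstarstar|) P = 0 ∧
    4 * (⨅ s : ℝ, variance (fun x => |x - s|) P) / variance (fun x => x) P = 0 ∧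
    4 * variance (fun x => |x - sstarstar|) P / variance (fun x => x) P = 0 := by
  have h1 : (0:ℝ) < 1 - ε := by linarith
  have hvarid : variance (fun x => x) P = ε * (1 - ε) * (μ₁ - μ₂) ^ 2 :=
    varP hε0 hε1 hP _
  have hd : μ₁ - μ₂ ≠ 0 := by linarith
  have hvpos : (0:ℝ) < ε * (1 - ε) * (μ₁ - μ₂) ^ 2 := by positivity
  -- compute sstarstar
  have hs2 : sstarstar = (μ₁ + μ₂) / 2 := by
    rw [hss, intP hε0 hε1 hP (fun x => x * x ^ 2), intP hε0 hε1 hP (fun x => x),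
      intP hε0 hε1 hP (fun x => x ^ 2), hvarid]
    field_simp
    ring
  -- variance of |x - (μ₁+μ₂)/2|
  have habs : variance (fun x => |x - (μ₁ + μ₂) / 2|) P = 0 := by
    rw [varP hε0 hε1 hP]
    have e1 : |μ₁ - (μ₁ + μ₂) / 2| = (μ₂ - μ₁) / 2 := by
      rw [abs_of_nonpos (by linarith)]; ring
    have e2 : |μ₂ - (μ₁ + μ₂) / 2| = (μ₂ - μ₁) / 2 := by
      rw [abs_of_nonneg (by linarith)]; ring
    rw [e1, e2]; ring
  have habs' : variance (fun x => |x - sstarstar|) P = 0 := by rw [hs2]; exact habs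
  have hbdd : BddBelow (Set.range fun s => variance (fun x => |x - s|) P) := by
    refine ⟨0, ?_⟩
    rintro x ⟨s, rfl⟩
    exact variance_nonneg _ _
  have hinf : (⨅ s : ℝ, variance (fun x => |x - s|) P) = 0 := by
    refine le_antisymm ?_ (le_ciInf fun s => variance_nonneg _ _)
    exact habs ▸ ciInf_le hbdd ((μ₁ + μ₂) / 2)
  have hsq : variance (fun x => (x - sstarstar) ^ 2) P = 0 := by
    rw [hs2, varP hε0 hε1 hP]
    ring
  refine ⟨hinf, habs, fun s => hsq ▸ variance_nonneg _ _, habs', ?_, ?_⟩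
  · rw [hinf]; simp
  · rw [habs']; simp
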